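/- Let a, b, c, d, e ∈ ℂ satisfy 0 < Re b < Re e, e ∉ {0,−1,−2,…} and a ∉ {1,2,3,…}. Then for all real x, y with |x| < 1 and |y|·(1+|x|) < 1: H₂(a,b,c,d,e;x,y) = [Γ(e)/(Γ(b)Γ(e−b))] · ∫₀¹ u^{b−1}(1−u)^{e−b−1}(1−xu)^{−a} · ₂F₁(d, c; 1−a; −y(1−xu)) du, where the ₂F₁ in the integrand is the convergent Gauss series (note |y(1−xu)| ≤ |y|(1+|x|) < 1 for u ∈ [0,1]). -/

import Mathlib

open MeasureTheory Complex Set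

noncomputable section

/-- Pochhammer symbol `(a)_k = a (a+1) ⋯ (a+k-1)`. -/
def poch (a : ℂ) (k : ℕ) : ℂ := ∏ i ∈ Finset.range k, (a + i)

/-- Horn's `H₂` function defined by its double power series. -/
def H2 (a b c d e : ℂ) (x y : ℝ) : ℂ :=
  ∑' p : ℕ × ℕ,
    (-1 : ℂ) ^ p.2 * poch (a - p.2) p.1 * poch b p.1 * poch c p.2 * poch d p.2 /
      (poch (1 - a) p.2 * poch e p.1 * (Nat.factorial p.1 : ℂ) * (Nat.factorial p.2 : ℂ)) *
    (x : ℂ) ^ p.1 * (y : ℂ) ^ p.2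

/-- Gauss hypergeometric series `₂F₁(a,b;c;z)`. -/
def gauss (a b c : ℂ) (z : ℂ) : ℂ :=
  ∑' k : ℕ, poch a k * poch b k / (poch c k * (Nat.factorial k : ℂ)) * z ^ k

namespace H2aux


lemma poch_zero (a : ℂ) : poch a 0 = 1 := by simp [poch]

lemma poch_one (a : ℂ) : poch a 1 = a := by simp [poch]

lemma poch_succ (a : ℂ) (k : ℕ) : poch a (k+1) = poch a k * (a + k) := by
  simp [poch, Finset.prod_range_succ]

lemma poch_add (z : ℂ) (m n : ℕ) : poch z (m + n) = poch z m * poch (z + m) n := by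
  unfold poch
  rw [Finset.prod_range_add]
  congr 1
  refine Finset.prod_congr rfl fun i _ => ?_
  push_cast; ring

lemma poch_front (z : ℂ) (k : ℕ) : poch z (k+1) = z * poch (z+1) k := by
  rw [add_comm k 1, poch_add, poch_one]
  norm_num

lemma poch_diag (a : ℂ) : ∀ j : ℕ, poch (a - j) j = (-1)^j * poch (1 - a) j := by
  intro j
  induction j with
  | zero => simp [poch]
  | succ j IH =>
    have h1 : poch (a - (j+1:ℕ)) (j+1) = (a - (j+1:ℕ)) * poch (a - j) j := by
      rw [poch_front]
      congr 2
      push_cast; ring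
    rw [h1, IH, poch_succ]
    push_cast; ring

lemma pochI1 (a : ℂ) {i j : ℕ} (h : j ≤ i) :
    poch (a - j) i = (-1)^j * poch (1-a) j * poch a (i - j) := by
  have h2 := poch_add (a - j) j (i - j)
  rw [Nat.add_sub_cancel' h] at h2
  rw [h2, poch_diag]
  ring_nf

lemma pochI2 (a : ℂ) : ∀ (i : ℕ) {j : ℕ}, i ≤ j →
    poch (a - j) i * poch (1-a) (j - i) = (-1)^i * poch (1-a) j := by
  intro i
  induction i with
  | zero => intro j _; simp [poch_zero]
  | succ i IH =>
    intro j h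
    have hij : i ≤ j := Nat.le_of_succ_le h
    have IH' := IH hij
    have hsplit : poch (1-a) (j - i) = poch (1-a) (j - (i+1)) * ((1-a) + (j - (i+1) : ℕ)) := by
      have : j - i = (j - (i+1)) + 1 := by omega
      rw [this, poch_succ]
    have hcast : ((j - (i+1) : ℕ) : ℂ) = (j : ℂ) - i - 1 := by
      rw [Nat.cast_sub h]; push_cast; ring
    rw [hsplit, hcast] at IH'
    rw [poch_succ]
    have key : (a - j + i) = -((1-a) + ((j:ℂ) - i - 1)) := by ring
    calc poch (a - j) i * (a - j + i) * poch (1-a) (j - (i+1))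
        = -(poch (a - j) i * (poch (1-a) (j - (i+1)) * (1 - a + ((j:ℂ) - i - 1)))) := by
          rw [key]; ring
      _ = -((-1)^i * poch (1-a) j) := by rw [IH']
      _ = (-1)^(i+1) * poch (1-a) j := by ring

lemma poch_ne_zero_of_re_pos {z : ℂ} (hz : 0 < z.re) (k : ℕ) : poch z k ≠ 0 := by
  unfold poch
  rw [Finset.prod_ne_zero_iff]
  intro i _
  intro h0
  have : (z + i).re = 0 := by rw [h0]; simp
  simp only [Complex.add_re, Complex.natCast_re] at this
  have := i.cast_nonneg (α := ℝ)
  linarith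

lemma poch_one_sub_ne_zero {a : ℂ} (ha : ∀ n : ℕ, a ≠ (n : ℂ) + 1) (k : ℕ) :
    poch (1 - a) k ≠ 0 := by
  unfold poch
  rw [Finset.prod_ne_zero_iff]
  intro i _
  intro h0
  exact ha i (by linear_combination -h0)




lemma nat_fact_le (k : ℕ) : ∀ s : ℕ, (k + s).factorial ≤ k.factorial * (k + s)^s := by
  intro s
  induction s with
  | zero => simp
  | succ s IH =>
    have h1 : k + (s+1) = (k + s) + 1 := by omega
    rw [h1, Nat.factorial_succ]
    calc (k + s + 1) * (k + s).factorial ≤ (k + s + 1) * (k.factorial * (k+s)^s) :=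
          Nat.mul_le_mul_left _ IH
      _ ≤ (k + s + 1) * (k.factorial * (k+s+1)^s) := by
          apply Nat.mul_le_mul_left
          apply Nat.mul_le_mul_left
          exact Nat.pow_le_pow_left (by omega) s
      _ = k.factorial * (k+s+1)^(s+1) := by ring

lemma nat_prod_eq (K : ℕ) (hK : 1 ≤ K) :
    ∀ k : ℕ, (∏ m ∈ Finset.range k, (K + m)) * (K-1).factorial = (K-1+k).factorial := by
  intro k
  induction k with
  | zero => simp
  | succ k IH =>
    rw [Finset.prod_range_succ]
    have h1 : K - 1 + (k+1) = (K - 1 + k) + 1 := by omega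
    rw [h1, Nat.factorial_succ, ← IH]
    have h2 : K - 1 + k + 1 = K + k := by omega
    rw [h2]; ring

lemma nat_prod_le (K : ℕ) (hK : 1 ≤ K) (k : ℕ) :
    (∏ m ∈ Finset.range k, (K + m)) ≤ k.factorial * (k+K)^K := by
  calc (∏ m ∈ Finset.range k, (K + m)) ≤ (∏ m ∈ Finset.range k, (K + m)) * (K-1).factorial :=
        Nat.le_mul_of_pos_right _ (Nat.factorial_pos _)
    _ = (K-1+k).factorial := nat_prod_eq K hK k
    _ = (k + (K-1)).factorial := by rw [Nat.add_comm]
    _ ≤ k.factorial * (k + (K-1))^(K-1) := nat_fact_le k (K-1)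
    _ ≤ k.factorial * (k+K)^K := by
        apply Nat.mul_le_mul_left
        calc (k + (K-1))^(K-1) ≤ (k+K)^(K-1) := Nat.pow_le_pow_left (by omega) _
          _ ≤ (k+K)^K := Nat.pow_le_pow_right (by omega) (by omega)

lemma norm_poch_le (z : ℂ) (K : ℕ) (hK : 1 ≤ K) (h : ‖z‖ ≤ K) (k : ℕ) :
    ‖poch z k‖ ≤ k.factorial * ((k + K : ℕ) : ℝ)^K := by
  have h1 : ‖poch z k‖ ≤ ∏ m ∈ Finset.range k, ((K : ℝ) + m) := by
    unfold poch
    rw [norm_prod]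
    apply Finset.prod_le_prod (fun i _ => norm_nonneg _)
    intro i _
    calc ‖z + i‖ ≤ ‖z‖ + ‖(i:ℂ)‖ := norm_add_le _ _
      _ ≤ K + i := by
          have : ‖(i:ℂ)‖ = i := by simp
          rw [this]; linarith
  have h2 : ∏ m ∈ Finset.range k, ((K : ℝ) + m) = ((∏ m ∈ Finset.range k, (K + m) : ℕ) : ℝ) := by
    push_cast; rfl
  rw [h2] at h1
  refine h1.trans ?_
  have := nat_prod_le K hK k
  calc ((∏ m ∈ Finset.range k, (K + m) : ℕ) : ℝ) ≤ ((k.factorial * (k+K)^K : ℕ) : ℝ) := by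
        exact_mod_cast this
    _ = k.factorial * ((k + K : ℕ) : ℝ)^K := by push_cast; ring

lemma nat_fact_le2 : ∀ (K k : ℕ), K ≤ k → k.factorial ≤ (k - K).factorial * (k+1)^K := by
  intro K
  induction K with
  | zero => intro k _; simp
  | succ K IH =>
    intro k h
    have hK : K ≤ k := Nat.le_of_succ_le h
    calc k.factorial ≤ (k - K).factorial * (k+1)^K := IH k hK
      _ ≤ ((k - (K+1)).factorial * (k+1)) * (k+1)^K := by
          apply Nat.mul_le_mul_right
          have h3 : k - K = (k - (K+1)) + 1 := by omega
          rw [h3, Nat.factorial_succ]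
          have : k - (K+1) + 1 ≤ k + 1 := by omega
          calc (k - (K+1) + 1) * (k - (K+1)).factorial
              ≤ (k+1) * (k - (K+1)).factorial := Nat.mul_le_mul_right _ this
            _ = (k - (K+1)).factorial * (k+1) := by ring
      _ = (k - (K+1)).factorial * (k+1)^(K+1) := by ring

lemma poch_ne_zero_of_ne {z : ℂ} (hz : ∀ m : ℕ, z + m ≠ 0) (k : ℕ) : poch z k ≠ 0 := by
  unfold poch
  rw [Finset.prod_ne_zero_iff]
  intro i _
  exact hz i

lemma poch_lower (z : ℂ) (hz : ∀ m : ℕ, z + m ≠ 0) :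
    ∃ (c : ℝ) (N : ℕ), 0 < c ∧ ∀ k : ℕ, c * k.factorial ≤ ‖poch z k‖ * ((k:ℝ)+1)^N := by
  set K := ⌊‖z‖⌋₊ + 2 with hKdef
  have hKz : ‖z‖ + 1 ≤ K := by
    have := Nat.lt_floor_add_one ‖z‖
    have : ‖z‖ < (⌊‖z‖⌋₊ : ℝ) + 1 := this
    push_cast [hKdef]
    linarith
  have hδ : 0 < ‖poch z K‖ := norm_pos_iff.mpr (poch_ne_zero_of_ne hz K)
  -- min over small k
  obtain ⟨k₀, hk₀mem, hk₀⟩ := Finset.exists_min_image (Finset.range K)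
    (fun k => ‖poch z k‖ / k.factorial) ⟨0, by simp [hKdef]⟩
  set c₀ := ‖poch z k₀‖ / k₀.factorial with hc₀
  have hc₀pos : 0 < c₀ := by
    apply div_pos (norm_pos_iff.mpr (poch_ne_zero_of_ne hz k₀))
    exact_mod_cast Nat.factorial_pos _
  refine ⟨min ‖poch z K‖ c₀, K, lt_min hδ hc₀pos, ?_⟩
  intro k
  rcases lt_or_ge k K with hk | hk
  · -- small k
    have h1 : c₀ * k.factorial ≤ ‖poch z k‖ := by
      have := hk₀ k (Finset.mem_range.mpr hk)
      have hkf : (0:ℝ) < k.factorial := by exact_mod_cast Nat.factorial_pos k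
      calc c₀ * k.factorial ≤ (‖poch z k‖ / k.factorial) * k.factorial := by
            apply mul_le_mul_of_nonneg_right this hkf.le
        _ = ‖poch z k‖ := div_mul_cancel₀ _ hkf.ne'
    have h2 : (1:ℝ) ≤ ((k:ℝ)+1)^K := one_le_pow₀ (by have := Nat.cast_nonneg (α:=ℝ) k; linarith)
    calc min ‖poch z K‖ c₀ * k.factorial ≤ c₀ * k.factorial := by
          exact mul_le_mul_of_nonneg_right (min_le_right _ _) (Nat.cast_nonneg _)
      _ ≤ ‖poch z k‖ := h1
      _ ≤ ‖poch z k‖ * ((k:ℝ)+1)^K := le_mul_of_one_le_right (norm_nonneg _) h2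
  · -- large k
    have hsplit : poch z k = poch z K * poch (z + K) (k - K) := by
      have := poch_add z K (k - K)
      rwa [Nat.add_sub_cancel' hk] at this
    have hlow : ((k - K).factorial : ℝ) ≤ ‖poch (z + K) (k - K)‖ := by
      unfold poch
      rw [norm_prod]
      have : ((k - K).factorial : ℝ) = ∏ t ∈ Finset.range (k - K), ((t:ℝ)+1) := by
        induction' (k - K) with n IHn
        · simp
        · rw [Finset.prod_range_succ, ← IHn, Nat.factorial_succ]
          push_cast; ring
      rw [this]
      apply Finset.prod_le_prod (fun t _ => by positivity)
      intro t _
      have h1 : ‖z + (K:ℂ) + (t:ℂ)‖ ≥ ‖((K:ℂ) + t)‖ - ‖z‖ := by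
        have := norm_add_le (-(z)) (z + K + t)
        have h2 : ‖(K:ℂ) + t‖ ≤ ‖z‖ + ‖z + K + t‖ := by
          calc ‖(K:ℂ) + t‖ = ‖-(z) + (z + K + t)‖ := by ring_nf
            _ ≤ ‖-(z)‖ + ‖z + K + t‖ := norm_add_le _ _
            _ = ‖z‖ + ‖z + K + t‖ := by rw [norm_neg]
        linarith
      have h3 : ‖(K:ℂ) + (t:ℂ)‖ = (K:ℝ) + t := by
        rw [show ((K:ℂ) + (t:ℂ)) = (((K + t : ℕ)):ℂ) by push_cast; ring,
          Complex.norm_natCast]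
        push_cast; ring
      have : (t:ℝ) + 1 ≤ (K + t) - ‖z‖ := by linarith
      calc (t:ℝ) + 1 ≤ (K + t) - ‖z‖ := this
        _ ≤ ‖z + (K:ℂ) + (t:ℂ)‖ := by rw [← h3]; linarith
  -- combine
    have hfty : (k.factorial : ℝ) ≤ ((k - K).factorial : ℝ) * ((k:ℝ)+1)^K := by
      have := nat_fact_le2 K k hk
      calc (k.factorial : ℝ) ≤ (((k - K).factorial * (k+1)^K : ℕ) : ℝ) := by exact_mod_cast this
        _ = ((k - K).factorial : ℝ) * ((k:ℝ)+1)^K := by push_cast; ring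
    have hnorm : ‖poch z k‖ = ‖poch z K‖ * ‖poch (z + K) (k - K)‖ := by
      rw [hsplit, norm_mul]
    calc min ‖poch z K‖ c₀ * k.factorial
        ≤ ‖poch z K‖ * k.factorial := by
          exact mul_le_mul_of_nonneg_right (min_le_left _ _) (Nat.cast_nonneg _)
      _ ≤ ‖poch z K‖ * (((k - K).factorial : ℝ) * ((k:ℝ)+1)^K) := by
          apply mul_le_mul_of_nonneg_left hfty hδ.le
      _ = (‖poch z K‖ * ((k - K).factorial : ℝ)) * ((k:ℝ)+1)^K := by ring
      _ ≤ (‖poch z K‖ * ‖poch (z + K) (k - K)‖) * ((k:ℝ)+1)^K := by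
          apply mul_le_mul_of_nonneg_right _ (by positivity)
          apply mul_le_mul_of_nonneg_left hlow hδ.le
      _ = ‖poch z k‖ * ((k:ℝ)+1)^K := by rw [hnorm]




lemma mem_slit_ball {z : ℂ} (hz : z ∈ Metric.ball (0:ℂ) 1) : 1 - z ∈ Complex.slitPlane := by
  left
  have h1 : ‖z‖ < 1 := by simpa [Metric.mem_ball] using hz
  have h2 : |z.re| ≤ ‖z‖ := Complex.abs_re_le_norm z
  have : (1 - z).re = 1 - z.re := by simp
  rw [this]
  cases abs_le.mp h2 with
  | intro h3 h4 => linarith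

lemma diffOn_binom (w : ℂ) :
    DifferentiableOn ℂ (fun z : ℂ => (1 - z) ^ (-w)) (Metric.ball (0:ℂ) 1) := by
  intro z hz
  apply DifferentiableAt.differentiableWithinAt
  exact ((differentiable_const (1:ℂ)).sub differentiable_id).differentiableAt.cpow
    (differentiableAt_const _) (mem_slit_ball hz)

lemma iteratedDeriv_binom (w : ℂ) :
    ∀ (n : ℕ) (z : ℂ), z ∈ Metric.ball (0:ℂ) 1 →
      iteratedDeriv n (fun z : ℂ => (1 - z) ^ (-w)) z = poch w n * (1 - z) ^ (-w - n) := by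
  intro n
  induction n with
  | zero => intro z hz; simp [poch]
  | succ n IH =>
    intro z hz
    rw [iteratedDeriv_succ]
    have hev : iteratedDeriv n (fun z : ℂ => (1 - z) ^ (-w)) =ᶠ[nhds z]
        (fun ζ => poch w n * (1 - ζ) ^ (-w - n)) := by
      filter_upwards [Metric.isOpen_ball.mem_nhds hz] with ζ hζ
      exact IH ζ hζ
    rw [hev.deriv_eq]
    have hd : HasDerivAt (fun ζ : ℂ => (1 - ζ) ^ (-w - n))
        ((-w - n) * (1 - z) ^ (-w - n - 1) * (-1)) z := by
      have h1 : HasDerivAt (fun ζ : ℂ => 1 - ζ) (-1) z := by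
        simpa using (hasDerivAt_id z).const_sub 1
      exact h1.cpow_const (mem_slit_ball hz)
    have := (hd.const_mul (poch w n)).deriv
    rw [this]
    rw [poch_succ]
    have hcast : ((n:ℂ)+1) = ((n+1 : ℕ) : ℂ) := by push_cast; ring
    have : -w - n - 1 = -w - ((n+1 : ℕ) : ℂ) := by push_cast; ring
    rw [← this]
    ring

theorem hasSum_binomial (w : ℂ) (z : ℂ) (hz : ‖z‖ < 1) :
    HasSum (fun k => poch w k / (Nat.factorial k : ℂ) * z ^ k) ((1 - z) ^ (-w)) := by
  have hball : z ∈ Metric.ball (0:ℂ) 1 := by simpa [Metric.mem_ball] using hz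
  have H := Complex.hasSum_taylorSeries_on_ball (diffOn_binom w) hball
  have h0 : (0:ℂ) ∈ Metric.ball (0:ℂ) 1 := by simp
  convert H using 2 with n
  case e'_3 => rfl
  rw [iteratedDeriv_binom w n 0 h0]
  simp only [sub_zero, smul_eq_mul]
  rw [Complex.one_cpow]
  field_simp


lemma Gamma_add_nat {b : ℂ} (hb : 0 < b.re) (n : ℕ) :
    Complex.Gamma (b + n) = Complex.Gamma b * poch b n := by
  induction n with
  | zero => simp [poch]
  | succ n IH =>
    have hne : b + n ≠ 0 := by
      intro h
      have : (b + (n:ℂ)).re = 0 := by rw [h]; simp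
      simp only [Complex.add_re, Complex.natCast_re] at this
      have := Nat.cast_nonneg (α := ℝ) n
      linarith
    have h1 : b + ((n+1 : ℕ):ℂ) = (b + n) + 1 := by push_cast; ring
    rw [h1, Complex.Gamma_add_one _ hne, IH, poch_succ]
    ring

lemma betaIntegral_eval {b u : ℂ} (hb : 0 < b.re) (hu : 0 < u.re) :
    Complex.betaIntegral b u = Complex.Gamma b * Complex.Gamma u / Complex.Gamma (b + u) := by
  have h := Complex.Gamma_mul_Gamma_eq_betaIntegral hb hu
  have hne : Complex.Gamma (b + u) ≠ 0 := by
    apply Complex.Gamma_ne_zero_of_re_pos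
    simp only [Complex.add_re]
    linarith
  field_simp [h]
  rw [h]; ring


/-- The coefficient in the expansion of the integrand. -/
def Acoef (a c d : ℂ) (p : ℕ × ℕ) : ℂ :=
  (-1 : ℂ)^p.2 * poch (a - p.2) p.1 * poch c p.2 * poch d p.2 /
    (poch (1 - a) p.2 * (Nat.factorial p.1 : ℂ) * (Nat.factorial p.2 : ℂ))

lemma summable_poly_geom (M : ℕ) {r : ℝ} (h0 : 0 ≤ r) (h1 : r < 1) :
    Summable (fun i : ℕ => ((i:ℝ)+1)^M * r^i) := by
  have hs1 : Summable (fun i : ℕ => ((i:ℝ))^M * r^i) :=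
    summable_pow_mul_geometric_of_norm_lt_one M
      (by rwa [Real.norm_eq_abs, _root_.abs_of_nonneg h0])
  have hs2 : Summable (fun i : ℕ => r^i) := summable_geometric_of_lt_one h0 h1
  have hs : Summable (fun i : ℕ => (2:ℝ)^M * ((i:ℝ)^M * r^i) + (2:ℝ)^M * r^i) :=
    (hs1.mul_left _).add (hs2.mul_left _)
  apply hs.of_nonneg_of_le (fun i => by positivity)
  intro i
  have hle : ((i:ℝ)+1)^M ≤ (2:ℝ)^M * (i:ℝ)^M + 2^M := by
    rcases Nat.eq_zero_or_pos i with hi | hi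
    · subst hi
      have h2 : (1:ℝ) ≤ 2^M := one_le_pow₀ (by norm_num)
      have h3 : (0:ℝ) ≤ 2^M * (0:ℝ)^M := by positivity
      simpa using by linarith
    · have h2 : ((i:ℝ)+1) ≤ 2*(i:ℝ) := by
        have : (1:ℝ) ≤ i := by exact_mod_cast hi
        linarith
      calc ((i:ℝ)+1)^M ≤ (2*(i:ℝ))^M := by
            apply pow_le_pow_left₀ (by positivity) h2
        _ = 2^M * (i:ℝ)^M := mul_pow 2 _ M
        _ ≤ 2^M * (i:ℝ)^M + 2^M := le_add_of_nonneg_right (by positivity)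
  calc ((i:ℝ)+1)^M * r^i ≤ ((2:ℝ)^M * (i:ℝ)^M + 2^M) * r^i :=
        mul_le_mul_of_nonneg_right hle (by positivity)
    _ = (2:ℝ)^M * ((i:ℝ)^M * r^i) + (2:ℝ)^M * r^i := by ring

lemma norm_Acoef (a c d : ℂ) (p : ℕ × ℕ) :
    ‖Acoef a c d p‖ = ‖poch (a - p.2) p.1‖ * ‖poch c p.2‖ * ‖poch d p.2‖ /
      (‖poch (1 - a) p.2‖ * (Nat.factorial p.1 : ℝ) * (Nat.factorial p.2 : ℝ)) := by
  unfold Acoef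
  rw [norm_div]
  congr 1
  · rw [norm_mul, norm_mul, norm_mul, norm_pow, norm_neg, norm_one, one_pow, one_mul]
  · rw [norm_mul, norm_mul, Complex.norm_natCast, Complex.norm_natCast]

/-- The master summability estimate. -/
lemma summable_A (a c d : ℂ) (ha : ∀ n : ℕ, a ≠ (n : ℂ) + 1) (x y : ℝ)
    (hx : |x| < 1) (hy : |y| * (1 + |x|) < 1) :
    Summable (fun p : ℕ × ℕ => ‖Acoef a c d p‖ * |x|^p.1 * |y|^p.2) := by
  have hyx : 0 ≤ |y| * (1 + |x|) := by positivity
  have hy1 : |y| < 1 := by nlinarith [abs_nonneg x, abs_nonneg y]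
  obtain ⟨c₁, N, hc₁, hlow⟩ := poch_lower (1 - a) (by
    intro m h0
    exact ha m (by linear_combination -h0))
  set K : ℕ := ⌈‖a‖⌉₊ + ⌈‖c‖⌉₊ + ⌈‖d‖⌉₊ + 2 with hK
  have hK1 : 1 ≤ K := by omega
  have hKa : ‖a‖ ≤ K := by
    have := Nat.le_ceil ‖a‖
    have h2 : (⌈‖a‖⌉₊ : ℝ) ≤ K := by
      have : ⌈‖a‖⌉₊ ≤ K := by omega
      exact_mod_cast this
    linarith
  have hKc : ‖c‖ ≤ K := by
    have := Nat.le_ceil ‖c‖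
    have h2 : (⌈‖c‖⌉₊ : ℝ) ≤ K := by
      have : ⌈‖c‖⌉₊ ≤ K := by omega
      exact_mod_cast this
    linarith
  have hKd : ‖d‖ ≤ K := by
    have := Nat.le_ceil ‖d‖
    have h2 : (⌈‖d‖⌉₊ : ℝ) ≤ K := by
      have : ⌈‖d‖⌉₊ ≤ K := by omega
      exact_mod_cast this
    linarith
  -- the two bounding families
  set f1 : ℕ → ℝ := fun i => ((i+K:ℕ):ℝ)^K * |x|^i with hf1def
  set g1 : ℕ → ℝ := fun j => ((j+K:ℕ):ℝ)^(2*K) * |y|^j with hg1def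
  set B2 : ℕ × ℕ → ℝ := fun q =>
    c₁⁻¹ * ((q.1+K:ℕ):ℝ)^(2*K) * ((q.1:ℝ)+1)^N * (q.1.choose q.2) * |x|^q.2 * |y|^q.1
    with hB2def
  -- summability of the bounding families
  have hcast : ∀ (i : ℕ) (M : ℕ), ((i+K:ℕ):ℝ)^M ≤ (K:ℝ)^M * ((i:ℝ)+1)^M := by
    intro i M
    have h1 : ((i+K:ℕ):ℝ) ≤ (K:ℝ) * ((i:ℝ)+1) := by
      push_cast
      have : (1:ℝ) ≤ K := by exact_mod_cast hK1
      nlinarith [Nat.cast_nonneg (α := ℝ) i]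
    calc ((i+K:ℕ):ℝ)^M ≤ ((K:ℝ) * ((i:ℝ)+1))^M := by
          apply pow_le_pow_left₀ (Nat.cast_nonneg _) h1
      _ = (K:ℝ)^M * ((i:ℝ)+1)^M := mul_pow _ _ _
  have hsumf1 : Summable f1 := by
    apply Summable.of_nonneg_of_le (fun i => by positivity)
      (fun i => ?_) (((summable_poly_geom K (abs_nonneg x) hx)).mul_left ((K:ℝ)^K))
    calc f1 i ≤ ((K:ℝ)^K * ((i:ℝ)+1)^K) * |x|^i :=
          mul_le_mul_of_nonneg_right (hcast i K) (by positivity)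
      _ = (K:ℝ)^K * (((i:ℝ)+1)^K * |x|^i) := by ring
  have hsumg1 : Summable g1 := by
    apply Summable.of_nonneg_of_le (fun j => by positivity)
      (fun j => ?_) (((summable_poly_geom (2*K) (abs_nonneg y) hy1)).mul_left ((K:ℝ)^(2*K)))
    calc g1 j ≤ ((K:ℝ)^(2*K) * ((j:ℝ)+1)^(2*K)) * |y|^j :=
          mul_le_mul_of_nonneg_right (hcast j (2*K)) (by positivity)
      _ = (K:ℝ)^(2*K) * (((j:ℝ)+1)^(2*K) * |y|^j) := by ring
  have hsum1 : Summable (fun p : ℕ × ℕ => f1 p.1 * g1 p.2) :=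
    hsumf1.mul_of_nonneg hsumg1 (fun i => by positivity) (fun j => by positivity)
  -- summability of B2
  have hsumB2 : Summable B2 := by
    rw [summable_prod_of_nonneg (fun q => by positivity)]
    constructor
    · intro j
      apply summable_of_ne_finset_zero (s := Finset.range (j+1))
      intro i hi
      have : j.choose i = 0 := Nat.choose_eq_zero_of_lt (by
        simp only [Finset.mem_range, not_lt] at hi; omega)
      simp [hB2def, this]
    · -- the function of j
      have htsum : ∀ j : ℕ, ∑' i, B2 (j, i) =
          c₁⁻¹ * ((j+K:ℕ):ℝ)^(2*K) * ((j:ℝ)+1)^N * ((1 + |x|)^j * |y|^j) := by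
        intro j
        rw [tsum_eq_sum (s := Finset.range (j+1)) (by
          intro i hi
          have : j.choose i = 0 := Nat.choose_eq_zero_of_lt (by
            simp only [Finset.mem_range, not_lt] at hi; omega)
          simp [hB2def, this])]
        have hbin : ∑ i ∈ Finset.range (j+1), ((j.choose i : ℝ)) * |x|^i = (1 + |x|)^j := by
          have h := add_pow |x| 1 j
          simp only [one_pow, mul_one] at h
          rw [add_comm 1 |x|, h]
          apply Finset.sum_congr rfl
          intro i _
          ring
        calc ∑ i ∈ Finset.range (j+1), B2 (j, i)
            = (c₁⁻¹ * ((j+K:ℕ):ℝ)^(2*K) * ((j:ℝ)+1)^N * |y|^j) *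
              ∑ i ∈ Finset.range (j+1), ((j.choose i : ℝ)) * |x|^i := by
              rw [Finset.mul_sum]
              apply Finset.sum_congr rfl
              intro i _
              simp only [hB2def]
              ring
          _ = c₁⁻¹ * ((j+K:ℕ):ℝ)^(2*K) * ((j:ℝ)+1)^N * ((1 + |x|)^j * |y|^j) := by
              rw [hbin]; ring
      rw [funext htsum]
      -- summable: poly * s^j with s = (1+|x|)*|y| < 1
      have hs : Summable (fun j : ℕ => ((j:ℝ)+1)^(2*K+N) * (|y| * (1+|x|))^j) :=
        summable_poly_geom _ hyx hy
      apply Summable.of_nonneg_of_le (fun j => by positivity) (fun j => ?_)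
        ((hs.mul_left (c₁⁻¹ * (K:ℝ)^(2*K))))
      have h2 : ((j+K:ℕ):ℝ)^(2*K) * ((j:ℝ)+1)^N ≤ (K:ℝ)^(2*K) * ((j:ℝ)+1)^(2*K+N) := by
        calc ((j+K:ℕ):ℝ)^(2*K) * ((j:ℝ)+1)^N
            ≤ ((K:ℝ)^(2*K) * ((j:ℝ)+1)^(2*K)) * ((j:ℝ)+1)^N :=
              mul_le_mul_of_nonneg_right (hcast j (2*K)) (by positivity)
          _ = (K:ℝ)^(2*K) * ((j:ℝ)+1)^(2*K+N) := by rw [pow_add]; ring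
      have h3 : (0:ℝ) ≤ (1 + |x|)^j * |y|^j := by positivity
      have h4 : (1 + |x|)^j * |y|^j = (|y| * (1+|x|))^j := by
        rw [mul_pow]; ring
      calc c₁⁻¹ * ((j+K:ℕ):ℝ)^(2*K) * ((j:ℝ)+1)^N * ((1 + |x|)^j * |y|^j)
          ≤ c₁⁻¹ * ((K:ℝ)^(2*K) * ((j:ℝ)+1)^(2*K+N)) * ((1 + |x|)^j * |y|^j) := by
            have hc₁' : (0:ℝ) ≤ c₁⁻¹ := by positivity
            calc c₁⁻¹ * ((j+K:ℕ):ℝ)^(2*K) * ((j:ℝ)+1)^N * ((1 + |x|)^j * |y|^j)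
                = c₁⁻¹ * (((j+K:ℕ):ℝ)^(2*K) * ((j:ℝ)+1)^N) * ((1 + |x|)^j * |y|^j) := by ring
              _ ≤ c₁⁻¹ * ((K:ℝ)^(2*K) * ((j:ℝ)+1)^(2*K+N)) * ((1 + |x|)^j * |y|^j) := by
                  apply mul_le_mul_of_nonneg_right _ h3
                  exact mul_le_mul_of_nonneg_left h2 hc₁'
        _ = c₁⁻¹ * (K:ℝ)^(2*K) * (((j:ℝ)+1)^(2*K+N) * (|y| * (1+|x|))^j) := by
            rw [← h4]; ring
  have hsum2 : Summable (fun p : ℕ × ℕ => B2 (p.2, p.1)) := by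
    have := (Equiv.prodComm ℕ ℕ).summable_iff.mpr hsumB2
    exact this
  -- the total bound
  apply Summable.of_nonneg_of_le (fun p => by positivity) (fun p => ?_) (hsum1.add hsum2)
  obtain ⟨i, j⟩ := p
  simp only
  have hne : poch (1-a) j ≠ 0 := poch_one_sub_ne_zero ha j
  have hm1 : 0 < ‖poch (1-a) j‖ := norm_pos_iff.mpr hne
  have hifac : (0:ℝ) < i.factorial := by exact_mod_cast i.factorial_pos
  have hjfac : (0:ℝ) < j.factorial := by exact_mod_cast j.factorial_pos
  have hn2 : ‖poch c j‖ ≤ (j.factorial : ℝ) * ((j+K:ℕ):ℝ)^K := norm_poch_le c K hK1 hKc j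
  have hn3 : ‖poch d j‖ ≤ (j.factorial : ℝ) * ((j+K:ℕ):ℝ)^K := norm_poch_le d K hK1 hKd j
  rcases le_or_gt j i with hij | hij
  · -- case j ≤ i : bound by f1 i * g1 j
    have hsplit := pochI1 a hij
    have hnorm1 : ‖poch (a - (j:ℂ)) i‖ = ‖poch (1-a) j‖ * ‖poch a (i-j)‖ := by
      rw [hsplit, norm_mul, norm_mul, norm_pow, norm_neg, norm_one, one_pow, one_mul]
    have hq : ‖poch a (i-j)‖ ≤ ((i-j).factorial : ℝ) * ((i+K:ℕ):ℝ)^K := by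
      refine (norm_poch_le a K hK1 hKa (i-j)).trans ?_
      apply mul_le_mul_of_nonneg_left _ (Nat.cast_nonneg _)
      have h5 : (((i-j)+K:ℕ):ℝ) ≤ ((i+K:ℕ):ℝ) := by
        exact_mod_cast Nat.add_le_add_right (Nat.sub_le i j) K
      exact pow_le_pow_left₀ (Nat.cast_nonneg _) h5 K
    have hfact : ((i-j).factorial : ℝ) * (j.factorial:ℝ) ≤ (i.factorial : ℝ) := by
      have h1 : (i-j).factorial * j.factorial ≤ i.factorial := by
        have h2 := Nat.choose_mul_factorial_mul_factorial hij
        calc (i-j).factorial * j.factorial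
            ≤ i.choose j * (j.factorial * (i-j).factorial) := by
              rw [← Nat.one_mul ((i-j).factorial * j.factorial)]
              calc 1 * ((i-j).factorial * j.factorial)
                  ≤ i.choose j * ((i-j).factorial * j.factorial) :=
                    Nat.mul_le_mul_right _ (Nat.choose_pos hij)
                _ = i.choose j * (j.factorial * (i-j).factorial) := by ring
          _ = i.factorial := by rw [← h2]; ring
      exact_mod_cast h1
    have hA : ‖Acoef a c d (i,j)‖ ≤ ((i+K:ℕ):ℝ)^K * ((j+K:ℕ):ℝ)^(2*K) := by
      rw [norm_Acoef]
      simp only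
      rw [hnorm1, div_le_iff₀ (by positivity)]
      calc ‖poch (1-a) j‖ * ‖poch a (i-j)‖ * ‖poch c j‖ * ‖poch d j‖
          ≤ ‖poch (1-a) j‖ * (((i-j).factorial : ℝ) * ((i+K:ℕ):ℝ)^K) *
            ((j.factorial : ℝ) * ((j+K:ℕ):ℝ)^K) * ((j.factorial : ℝ) * ((j+K:ℕ):ℝ)^K) := by
            gcongr
        _ = (((i+K:ℕ):ℝ)^K * ((j+K:ℕ):ℝ)^(2*K)) *
            ((((i-j).factorial:ℝ) * (j.factorial:ℝ)) * (j.factorial:ℝ)) * ‖poch (1-a) j‖ := by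
            rw [two_mul, pow_add]; ring
        _ ≤ (((i+K:ℕ):ℝ)^K * ((j+K:ℕ):ℝ)^(2*K)) *
            ((i.factorial:ℝ) * (j.factorial:ℝ)) * ‖poch (1-a) j‖ := by
            gcongr
        _ = ((i+K:ℕ):ℝ)^K * ((j+K:ℕ):ℝ)^(2*K) * (‖poch (1-a) j‖ * ↑i.factorial * ↑j.factorial) := by
            ring
    have hfin : ‖Acoef a c d (i,j)‖ * |x|^i * |y|^j ≤ f1 i * g1 j := by
      calc ‖Acoef a c d (i,j)‖ * |x|^i * |y|^j
          ≤ (((i+K:ℕ):ℝ)^K * ((j+K:ℕ):ℝ)^(2*K)) * |x|^i * |y|^j := by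
            gcongr
        _ = f1 i * g1 j := by simp only [hf1def, hg1def]; ring
    exact hfin.trans (le_add_of_nonneg_right (by positivity))
  · -- case i < j : bound by B2 (j,i)
    have hij' : i ≤ j := le_of_lt hij
    have hsplit := pochI2 a i hij'
    have hnorm1 : ‖poch (a-(j:ℂ)) i‖ * ‖poch (1-a) (j-i)‖ = ‖poch (1-a) j‖ := by
      rw [← norm_mul, hsplit, norm_mul, norm_pow, norm_neg, norm_one, one_pow, one_mul]
    have hm2 : 0 < ‖poch (1-a) (j-i)‖ :=
      norm_pos_iff.mpr (poch_one_sub_ne_zero ha (j-i))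
    have hn1pos : 0 < ‖poch (a-(j:ℂ)) i‖ := by
      rcases eq_or_lt_of_le (norm_nonneg (poch (a-(j:ℂ)) i)) with h0 | h0
      · exfalso
        rw [← h0, zero_mul] at hnorm1
        exact hm1.ne (hnorm1)
      · exact h0
    have hA : ‖Acoef a c d (i,j)‖ =
        ‖poch c j‖ * ‖poch d j‖ / (‖poch (1-a) (j-i)‖ * i.factorial * j.factorial) := by
      rw [norm_Acoef]
      simp only
      rw [← hnorm1]
      rw [show ‖poch (a-(j:ℂ)) i‖ * ‖poch c j‖ * ‖poch d j‖
          = ‖poch (a-(j:ℂ)) i‖ * (‖poch c j‖ * ‖poch d j‖) by ring,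
        show ‖poch (a-(j:ℂ)) i‖ * ‖poch (1-a) (j-i)‖ * ↑i.factorial * ↑j.factorial
          = ‖poch (a-(j:ℂ)) i‖ * (‖poch (1-a) (j-i)‖ * ↑i.factorial * ↑j.factorial) by ring,
        mul_div_mul_left _ _ hn1pos.ne']
    have hch : ((j.choose i : ℕ):ℝ) * (i.factorial:ℝ) * ((j-i).factorial:ℝ) = (j.factorial:ℝ) := by
      have := Nat.choose_mul_factorial_mul_factorial hij'
      exact_mod_cast this
    have hpow : ((((j-i):ℕ):ℝ)+1)^N ≤ ((j:ℝ)+1)^N := by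
      apply pow_le_pow_left₀ (by positivity)
      have : ((j-i:ℕ):ℝ) ≤ (j:ℝ) := by exact_mod_cast Nat.sub_le j i
      linarith
    have hkey2 : (j.factorial : ℝ) ≤
        c₁⁻¹ * ((j:ℝ)+1)^N * (j.choose i) * (‖poch (1-a) (j-i)‖ * i.factorial) := by
      rw [← hch]
      rw [← mul_le_mul_iff_right₀ hc₁]
      have h1 := hlow (j-i)
      calc c₁ * (((j.choose i : ℕ):ℝ) * (i.factorial:ℝ) * ((j-i).factorial:ℝ))
          = (((j.choose i : ℕ):ℝ) * (i.factorial:ℝ)) * (c₁ * ((j-i).factorial:ℝ)) := by ring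
        _ ≤ (((j.choose i : ℕ):ℝ) * (i.factorial:ℝ)) *
            (‖poch (1-a) (j-i)‖ * ((((j-i):ℕ):ℝ)+1)^N) := by
            apply mul_le_mul_of_nonneg_left h1 (by positivity)
        _ ≤ (((j.choose i : ℕ):ℝ) * (i.factorial:ℝ)) *
            (‖poch (1-a) (j-i)‖ * (((j:ℝ)+1))^N) := by
            gcongr
        _ = c₁ * (c₁⁻¹ * ((j:ℝ)+1)^N * (j.choose i) * (‖poch (1-a) (j-i)‖ * i.factorial)) := by
            field_simp
    have hAle : ‖Acoef a c d (i,j)‖ ≤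
        c₁⁻¹ * ((j+K:ℕ):ℝ)^(2*K) * ((j:ℝ)+1)^N * (j.choose i) := by
      rw [hA, div_le_iff₀ (by positivity)]
      calc ‖poch c j‖ * ‖poch d j‖
          ≤ ((j.factorial : ℝ) * ((j+K:ℕ):ℝ)^K) * ((j.factorial : ℝ) * ((j+K:ℕ):ℝ)^K) := by
            gcongr
        _ = ((j+K:ℕ):ℝ)^(2*K) * ((j.factorial:ℝ) * (j.factorial:ℝ)) := by
            rw [two_mul, pow_add]; ring
        _ ≤ ((j+K:ℕ):ℝ)^(2*K) *
            ((c₁⁻¹ * ((j:ℝ)+1)^N * (j.choose i) * (‖poch (1-a) (j-i)‖ * i.factorial)) *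
              (j.factorial:ℝ)) := by
            have hnn : (0:ℝ) ≤ ((j+K:ℕ):ℝ)^(2*K) := by positivity
            apply mul_le_mul_of_nonneg_left _ hnn
            exact mul_le_mul_of_nonneg_right hkey2 (Nat.cast_nonneg _)
        _ = c₁⁻¹ * ((j+K:ℕ):ℝ)^(2*K) * ((j:ℝ)+1)^N * (j.choose i) *
            (‖poch (1-a) (j-i)‖ * ↑i.factorial * ↑j.factorial) := by ring
    have hfin : ‖Acoef a c d (i,j)‖ * |x|^i * |y|^j ≤ B2 (j, i) := by
      have : B2 (j, i) = (c₁⁻¹ * ((j+K:ℕ):ℝ)^(2*K) * ((j:ℝ)+1)^N * (j.choose i)) *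
          |x|^i * |y|^j := by
        simp only [hB2def]; try ring
      rw [this]
      gcongr
    exact hfin.trans (le_add_of_nonneg_left (by positivity))


lemma norm_beta_integrand {u : ℝ} (hu0 : 0 < u) (hu1 : u < 1) (s t : ℂ) :
    ‖(u:ℂ)^s * (1 - (u:ℂ))^t‖ = u ^ s.re * (1-u) ^ t.re := by
  rw [norm_mul, show (1 - (u:ℂ)) = ((1-u:ℝ):ℂ) by push_cast; ring,
    Complex.norm_cpow_eq_rpow_re_of_pos hu0, Complex.norm_cpow_eq_rpow_re_of_pos (by linarith)]

/-- The function expanded under the integral sign. -/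
def gfun (a b c d e : ℂ) (x y : ℝ) (p : ℕ × ℕ) (u : ℝ) : ℂ :=
  Acoef a c d p * (x:ℂ)^p.1 * (y:ℂ)^p.2 *
    ((u:ℂ)^(b + p.1 - 1) * (1 - (u:ℂ))^(e - b - 1))

lemma norm_gfun (a b c d e : ℂ) (x y : ℝ) (p : ℕ × ℕ) {u : ℝ}
    (hu0 : 0 < u) (hu1 : u < 1) :
    ‖gfun a b c d e x y p u‖ = ‖Acoef a c d p‖ * |x|^p.1 * |y|^p.2 *
      (u ^ (b.re + p.1 - 1) * (1-u) ^ ((e - b - 1).re)) := by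
  unfold gfun
  rw [norm_mul, norm_mul, norm_mul, norm_pow, norm_pow, Complex.norm_real, Complex.norm_real,
    Real.norm_eq_abs, Real.norm_eq_abs, norm_beta_integrand hu0 hu1]
  have : (b + (p.1:ℂ) - 1).re = b.re + p.1 - 1 := by simp
  rw [this]

lemma summable_gfun (a b c d e : ℂ) (ha : ∀ n : ℕ, a ≠ (n : ℂ) + 1) (x y : ℝ)
    (hx : |x| < 1) (hy : |y| * (1 + |x|) < 1) {u : ℝ} (hu0 : 0 < u) (hu1 : u < 1) :
    Summable (fun p : ℕ × ℕ => gfun a b c d e x y p u) := by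
  apply Summable.of_norm_bounded ((summable_A a c d ha x y hx hy).mul_right
    (u ^ (b.re - 1) * (1-u) ^ ((e - b - 1).re)))
  intro p
  rw [norm_gfun a b c d e x y p hu0 hu1]
  have h1 : u ^ (b.re + p.1 - 1) ≤ u ^ (b.re - 1) := by
    apply Real.rpow_le_rpow_of_exponent_ge hu0 hu1.le
    have := Nat.cast_nonneg (α := ℝ) p.1
    linarith
  have h2 : (0:ℝ) ≤ (1-u) ^ ((e - b - 1).re) := Real.rpow_nonneg (by linarith) _
  calc ‖Acoef a c d p‖ * |x|^p.1 * |y|^p.2 * (u ^ (b.re + p.1 - 1) * (1-u) ^ ((e - b - 1).re))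
      ≤ ‖Acoef a c d p‖ * |x|^p.1 * |y|^p.2 * (u ^ (b.re - 1) * (1-u) ^ ((e - b - 1).re)) := by
        apply mul_le_mul_of_nonneg_left _ (by positivity)
        exact mul_le_mul_of_nonneg_right h1 h2
    _ = ‖Acoef a c d p‖ * |x|^p.1 * |y|^p.2 * (u ^ (b.re - 1) * (1-u) ^ ((e - b - 1).re)) := rfl

lemma integrand_eq (a b c d e : ℂ) (ha : ∀ n : ℕ, a ≠ (n : ℂ) + 1)
    (x y : ℝ) (hx : |x| < 1) (hy : |y| * (1 + |x|) < 1)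
    {u : ℝ} (hu0 : 0 < u) (hu1 : u < 1) :
    (u:ℂ)^(b-1) * ((1-u:ℝ):ℂ)^(e-b-1) * ((1 - x*u:ℝ):ℂ)^(-a) *
      gauss d c (1-a) ((-y*(1-x*u):ℝ):ℂ)
    = ∑' p : ℕ × ℕ, gfun a b c d e x y p u := by
  have hr : |x*u| < 1 := by
    rw [abs_mul, abs_of_pos hu0]
    nlinarith [abs_nonneg x]
  have hw0 : 0 < 1 - x*u := by
    cases abs_lt.mp hr with
    | intro h1 h2 => linarith
  have hwne : ((1 - x*u : ℝ):ℂ) ≠ 0 := by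
    simp only [ne_eq, Complex.ofReal_eq_zero]
    linarith
  have hune : (u:ℂ) ≠ 0 := by
    simp only [ne_eq, Complex.ofReal_eq_zero]
    linarith
  -- step 1 : push the prefactor into the gauss sum
  rw [gauss, ← tsum_mul_left]
  -- step 2 : identify each summand with an inner tsum
  have hstep : ∀ j : ℕ,
      (u:ℂ)^(b-1) * ((1-u:ℝ):ℂ)^(e-b-1) * ((1 - x*u:ℝ):ℂ)^(-a) *
        (poch d j * poch c j / (poch (1-a) j * (Nat.factorial j : ℂ)) *
          ((-y*(1-x*u):ℝ):ℂ)^j)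
      = ∑' i : ℕ, gfun a b c d e x y (i, j) u := by
    intro j
    have hbin := hasSum_binomial (a - j) ((x*u : ℝ):ℂ)
      (by rwa [Complex.norm_real, Real.norm_eq_abs])
    have hcast1 : (1 : ℂ) - ((x*u : ℝ):ℂ) = ((1 - x*u : ℝ):ℂ) := by push_cast; ring
    have hcast2 : -(a - (j:ℂ)) = (j:ℂ) - a := by ring
    rw [hcast1, hcast2] at hbin
    have hpow : ((1 - x*u:ℝ):ℂ)^(-a) * ((-y*(1-x*u):ℝ):ℂ)^j
        = ((-y:ℝ):ℂ)^j * ((1 - x*u:ℝ):ℂ)^((j:ℂ) - a) := by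
      have h3 : ((-y*(1-x*u):ℝ):ℂ)^j = ((-y:ℝ):ℂ)^j * ((1 - x*u:ℝ):ℂ)^(j:ℕ) := by
        rw [← mul_pow]
        congr 1
        push_cast; ring
      rw [h3]
      have h4 : ((1 - x*u:ℝ):ℂ)^((j:ℂ) - a) = ((1 - x*u:ℝ):ℂ)^(j:ℕ) * ((1 - x*u:ℝ):ℂ)^(-a) := by
        rw [show ((j:ℂ) - a) = (j:ℂ) + (-a) from sub_eq_add_neg _ _, cpow_add _ _ hwne,
          Complex.cpow_natCast]
      rw [h4]
      ring
    calc (u:ℂ)^(b-1) * ((1-u:ℝ):ℂ)^(e-b-1) * ((1 - x*u:ℝ):ℂ)^(-a) *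
          (poch d j * poch c j / (poch (1-a) j * (Nat.factorial j : ℂ)) *
            ((-y*(1-x*u):ℝ):ℂ)^j)
        = ((u:ℂ)^(b-1) * ((1-u:ℝ):ℂ)^(e-b-1) * ((-y:ℝ):ℂ)^j *
            (poch d j * poch c j / (poch (1-a) j * (Nat.factorial j : ℂ)))) *
          ((1 - x*u:ℝ):ℂ)^((j:ℂ) - a) := by
          rw [show (u:ℂ)^(b-1) * ((1-u:ℝ):ℂ)^(e-b-1) * ((1 - x*u:ℝ):ℂ)^(-a) *
              (poch d j * poch c j / (poch (1-a) j * (Nat.factorial j : ℂ)) *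
                ((-y*(1-x*u):ℝ):ℂ)^j)
            = (u:ℂ)^(b-1) * ((1-u:ℝ):ℂ)^(e-b-1) *
              (poch d j * poch c j / (poch (1-a) j * (Nat.factorial j : ℂ))) *
              (((1 - x*u:ℝ):ℂ)^(-a) * ((-y*(1-x*u):ℝ):ℂ)^j) by ring, hpow]
          ring
      _ = ∑' i : ℕ, ((u:ℂ)^(b-1) * ((1-u:ℝ):ℂ)^(e-b-1) * ((-y:ℝ):ℂ)^j *
            (poch d j * poch c j / (poch (1-a) j * (Nat.factorial j : ℂ)))) *
            (poch (a - j) i / (Nat.factorial i : ℂ) * ((x*u : ℝ):ℂ)^i) := by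
          rw [← hbin.tsum_eq, ← tsum_mul_left]
      _ = ∑' i : ℕ, gfun a b c d e x y (i, j) u := by
          apply tsum_congr
          intro i
          unfold gfun Acoef
          simp only
          have h5 : ((x*u : ℝ):ℂ)^i = (x:ℂ)^i * (u:ℂ)^(i:ℕ) := by
            rw [← mul_pow]; congr 1; push_cast; ring
          have h6 : (u:ℂ)^(b + (i:ℂ) - 1) = (u:ℂ)^(b - 1) * (u:ℂ)^(i:ℕ) := by
            rw [show b + (i:ℂ) - 1 = (b - 1) + (i:ℂ) by ring, cpow_add _ _ hune,
              Complex.cpow_natCast]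
          have h7 : (1 - (u:ℂ)) = ((1-u:ℝ):ℂ) := by push_cast; ring
          have h8 : ((-y:ℝ):ℂ)^j = (-1:ℂ)^j * (y:ℂ)^j := by
            push_cast
            rw [show -(y:ℂ) = (-1) * (y:ℂ) by ring, mul_pow]
          rw [h5, h6, h7, h8]
          ring
  rw [tsum_congr hstep]
  -- step 3 : collapse the iterated sum
  have hsum := summable_gfun a b c d e ha x y hx hy hu0 hu1
  have hswap : Summable (fun q : ℕ × ℕ => gfun a b c d e x y (q.2, q.1) u) := by
    have := (Equiv.prodComm ℕ ℕ).summable_iff.mpr hsum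
    exact this
  rw [show (fun j : ℕ => ∑' i : ℕ, gfun a b c d e x y (i, j) u)
      = fun j : ℕ => ∑' i : ℕ, (fun q : ℕ × ℕ => gfun a b c d e x y (q.2, q.1) u) (j, i) from rfl]
  rw [← Summable.tsum_prod' hswap (fun j => hswap.prod_factor j)]
  exact ((Equiv.prodComm ℕ ℕ).tsum_eq (fun p => gfun a b c d e x y p u))


lemma integrableOn_beta (b e : ℂ) (hb : 0 < b.re) (hbe : 0 < (e-b).re) (i : ℕ) :
    IntegrableOn (fun u : ℝ => (u:ℂ)^(b + i - 1) * (1 - (u:ℂ))^(e - b - 1))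
      (Ioo (0:ℝ) 1) := by
  have h1 : 0 < (b + (i:ℂ)).re := by
    simp only [Complex.add_re, Complex.natCast_re]
    have := Nat.cast_nonneg (α := ℝ) i
    linarith
  have h2 := Complex.betaIntegral_convergent h1 hbe
  rw [intervalIntegrable_iff] at h2
  refine h2.mono_set ?_
  rw [Set.uIoc_of_le (zero_le_one (α := ℝ))]
  exact Ioo_subset_Ioc_self

lemma integrableOn_gfun (a b c d e : ℂ) (hb : 0 < b.re) (hbe : 0 < (e-b).re)
    (x y : ℝ) (p : ℕ × ℕ) :
    IntegrableOn (fun u : ℝ => gfun a b c d e x y p u) (Ioo (0:ℝ) 1) := by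
  have h3 := integrableOn_beta b e hb hbe p.1
  have := h3.const_mul (Acoef a c d p * (x:ℂ)^p.1 * (y:ℂ)^p.2)
  exact this

lemma integral_gfun (a b c d e : ℂ) (hb : 0 < b.re) (hbe : 0 < (e-b).re)
    (x y : ℝ) (p : ℕ × ℕ) :
    ∫ u in Ioo (0:ℝ) 1, gfun a b c d e x y p u
      = Acoef a c d p * (x:ℂ)^p.1 * (y:ℂ)^p.2 *
        Complex.betaIntegral (b + p.1) (e - b) := by
  unfold gfun
  rw [MeasureTheory.integral_const_mul]
  rw [Complex.betaIntegral]
  rw [intervalIntegral.integral_of_le (zero_le_one (α := ℝ)), integral_Ioc_eq_integral_Ioo]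

lemma summable_integral_norm_gfun (a b c d e : ℂ) (ha : ∀ n : ℕ, a ≠ (n : ℂ) + 1)
    (hb : 0 < b.re) (hbe : 0 < (e-b).re) (x y : ℝ)
    (hx : |x| < 1) (hy : |y| * (1 + |x|) < 1) :
    Summable (fun p : ℕ × ℕ => ∫ u in Ioo (0:ℝ) 1, ‖gfun a b c d e x y p u‖) := by
  set J0 : ℝ := ∫ u in Ioo (0:ℝ) 1, ‖(u:ℂ)^(b + (0:ℕ) - 1) * (1 - (u:ℂ))^(e - b - 1)‖ with hJ0
  apply Summable.of_nonneg_of_le (fun p => integral_nonneg (fun u => norm_nonneg _))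
    (fun p => ?_) ((summable_A a c d ha x y hx hy).mul_right J0)
  have hint0 := (integrableOn_beta b e hb hbe 0).norm
  have hintp := (integrableOn_gfun a b c d e hb hbe x y p).norm
  calc ∫ u in Ioo (0:ℝ) 1, ‖gfun a b c d e x y p u‖
      ≤ ∫ u in Ioo (0:ℝ) 1, (‖Acoef a c d p‖ * |x|^p.1 * |y|^p.2) *
          ‖(u:ℂ)^(b + (0:ℕ) - 1) * (1 - (u:ℂ))^(e - b - 1)‖ := by
        apply setIntegral_mono_on hintp (hint0.const_mul _) measurableSet_Ioo
        intro u hu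
        obtain ⟨hu0, hu1⟩ := hu
        rw [norm_gfun a b c d e x y p hu0 hu1, norm_beta_integrand hu0 hu1]
        have h1 : u ^ (b.re + p.1 - 1) ≤ u ^ ((b + ((0:ℕ):ℂ) - 1).re) := by
          apply Real.rpow_le_rpow_of_exponent_ge hu0 hu1.le
          simp only [Complex.sub_re, Complex.add_re, Complex.natCast_re, Complex.one_re]
          have := Nat.cast_nonneg (α := ℝ) p.1
          push_cast
          linarith
        have h2 : (0:ℝ) ≤ (1-u) ^ ((e - b - 1).re) := Real.rpow_nonneg (by linarith) _
        apply mul_le_mul_of_nonneg_left _ (by positivity)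
        exact mul_le_mul_of_nonneg_right h1 h2
    _ = (‖Acoef a c d p‖ * |x|^p.1 * |y|^p.2) * J0 := MeasureTheory.integral_const_mul _ _

end H2aux

open H2aux in
theorem H2_single_integral_representation
    (a b c d e : ℂ)
    (hb : 0 < b.re) (hbe : b.re < e.re)
    (he : ∀ n : ℕ, e ≠ -(n : ℂ)) (ha : ∀ n : ℕ, a ≠ (n : ℂ) + 1)
    (x y : ℝ) (hx : |x| < 1) (hy : |y| * (1 + |x|) < 1) :
    H2 a b c d e x y =
      Complex.Gamma e / (Complex.Gamma b * Complex.Gamma (e - b)) *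
      ∫ u in (0:ℝ)..1,
        (u : ℂ) ^ (b - 1) * ((1 - u : ℝ) : ℂ) ^ (e - b - 1) *
        ((1 - x * u : ℝ) : ℂ) ^ (-a) *
        gauss d c (1 - a) ((-y * (1 - x * u) : ℝ) : ℂ) := by
  have hbe' : 0 < (e - b).re := by
    simp only [Complex.sub_re]
    linarith
  have he' : 0 < e.re := lt_trans hb hbe
  rw [intervalIntegral.integral_of_le (zero_le_one (α := ℝ)), integral_Ioc_eq_integral_Ioo]
  rw [setIntegral_congr_fun measurableSet_Ioo
    (fun u hu => integrand_eq a b c d e ha x y hx hy hu.1 hu.2)]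
  rw [← integral_tsum_of_summable_integral_norm
    (fun p => integrableOn_gfun a b c d e hb hbe' x y p)
    (summable_integral_norm_gfun a b c d e ha hb hbe' x y hx hy)]
  rw [← tsum_mul_left]
  unfold H2
  apply tsum_congr
  intro p
  rw [integral_gfun a b c d e hb hbe' x y p]
  have hbi : 0 < (b + (p.1:ℂ)).re := by
    simp only [Complex.add_re, Complex.natCast_re]
    have := Nat.cast_nonneg (α := ℝ) p.1
    linarith
  rw [betaIntegral_eval hbi hbe']
  rw [show (b + (p.1:ℂ)) + (e - b) = e + (p.1:ℂ) by ring]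
  rw [Gamma_add_nat hb p.1, Gamma_add_nat he' p.1]
  have hΓb : Complex.Gamma b ≠ 0 := Complex.Gamma_ne_zero_of_re_pos hb
  have hΓeb : Complex.Gamma (e - b) ≠ 0 := Complex.Gamma_ne_zero_of_re_pos hbe'
  have hΓe : Complex.Gamma e ≠ 0 := Complex.Gamma_ne_zero_of_re_pos he'
  have hpe : poch e p.1 ≠ 0 := poch_ne_zero_of_re_pos he' p.1
  have hpa : poch (1 - a) p.2 ≠ 0 := poch_one_sub_ne_zero ha p.2
  have hfi : ((p.1.factorial : ℂ)) ≠ 0 := by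
    exact_mod_cast Nat.cast_ne_zero.mpr p.1.factorial_ne_zero
  have hfj : ((p.2.factorial : ℂ)) ≠ 0 := by
    exact_mod_cast Nat.cast_ne_zero.mpr p.2.factorial_ne_zero
  symm
  have hβval : Complex.Gamma e / (Complex.Gamma b * Complex.Gamma (e - b)) *
      (Complex.Gamma b * poch b p.1 * Complex.Gamma (e - b) /
        (Complex.Gamma e * poch e p.1)) = poch b p.1 / poch e p.1 := by
    rw [div_mul_div_comm, div_eq_div_iff (by
      exact mul_ne_zero (mul_ne_zero hΓb hΓeb) (mul_ne_zero hΓe hpe)) hpe]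
    ring
  calc Complex.Gamma e / (Complex.Gamma b * Complex.Gamma (e - b)) *
        (Acoef a c d p * (x:ℂ)^p.1 * (y:ℂ)^p.2 *
          (Complex.Gamma b * poch b p.1 * Complex.Gamma (e - b) /
            (Complex.Gamma e * poch e p.1)))
      = (Acoef a c d p * (x:ℂ)^p.1 * (y:ℂ)^p.2) *
        (Complex.Gamma e / (Complex.Gamma b * Complex.Gamma (e - b)) *
          (Complex.Gamma b * poch b p.1 * Complex.Gamma (e - b) /
            (Complex.Gamma e * poch e p.1))) := by ring
    _ = (Acoef a c d p * (x:ℂ)^p.1 * (y:ℂ)^p.2) * (poch b p.1 / poch e p.1) := by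
        rw [hβval]
    _ = (-1 : ℂ) ^ p.2 * poch (a - p.2) p.1 * poch b p.1 * poch c p.2 * poch d p.2 /
        (poch (1 - a) p.2 * poch e p.1 * (Nat.factorial p.1 : ℂ) * (Nat.factorial p.2 : ℂ)) *
        (x : ℂ) ^ p.1 * (y : ℂ) ^ p.2 := by
        unfold Acoef
        field_simp
    _ = _ := rfl


end
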